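/- Fix reals P ≥ 3 and Q ≥ 1, and define F_r : (0,∞) → ℝ recursively by F_0(ε) = Q·ε⁻¹ and F_r(ε) = exp_2(P·ε⁻²)·F_{r−1}(ε²·P⁻¹) for r ≥ 1. Then there exist constants C₂ > C₁ > 0 (depending only on P and Q) such that for all ε with 0 < ε ≤ 1/2, one has exp_4(C₁·ε⁻¹) ≤ F_{⌊ε⁻¹⌋}(ε) ≤ exp_4(C₂·ε⁻¹). -/
import Mathlib


noncomputable section

/-- `exp_2`, the 2-fold iterated exponential. -/
def exp2 (x : ℝ) : ℝ := Real.exp (Real.exp x)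

/-- `exp_4`, the 4-fold iterated exponential. -/
def exp4 (x : ℝ) : ℝ := Real.exp (Real.exp (Real.exp (Real.exp x)))

/-- The recursively defined functions `F_r`: `F_0(ε) = Q·ε⁻¹` and
`F_r(ε) = exp_2(P·ε⁻²)·F_{r−1}(ε²·P⁻¹)` for `r ≥ 1`. -/
def Fiter (P Q : ℝ) : ℕ → ℝ → ℝ
  | 0, ε => Q * ε⁻¹
  | r + 1, ε => exp2 (P * (ε⁻¹) ^ 2) * Fiter P Q r (ε ^ 2 * P⁻¹)

namespace FiterAux

/-- The sequence `ε_k`: `ε_0 = ε`, `ε_{k+1} = ε_k² / P`. -/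
def epsIt (P ε : ℝ) : ℕ → ℝ
  | 0 => ε
  | n + 1 => (epsIt P ε n) ^ 2 * P⁻¹

lemma epsIt_pos {P ε : ℝ} (hP : 0 < P) (hε : 0 < ε) : ∀ n, 0 < epsIt P ε n
  | 0 => hε
  | n + 1 => by
      have h := epsIt_pos hP hε n
      have h2 : 0 < (epsIt P ε n) ^ 2 := by positivity
      exact mul_pos h2 (inv_pos.mpr hP)

lemma epsIt_le_one {P ε : ℝ} (hP : 1 ≤ P) (hε : 0 < ε) (hε1 : ε ≤ 1) :
    ∀ n, epsIt P ε n ≤ 1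
  | 0 => hε1
  | n + 1 => by
      have h1 := epsIt_le_one hP hε hε1 n
      have h0 := epsIt_pos (lt_of_lt_of_le one_pos hP) hε n
      have hPinv : P⁻¹ ≤ 1 := inv_le_one_of_one_le₀ hP
      have hPinv0 : 0 < P⁻¹ := inv_pos.mpr (lt_of_lt_of_le one_pos hP)
      show (epsIt P ε n) ^ 2 * P⁻¹ ≤ 1
      nlinarith

lemma epsIt_le_self {P ε : ℝ} (hP : 1 ≤ P) (hε : 0 < ε) (hε1 : ε ≤ 1) :
    ∀ n, epsIt P ε n ≤ ε
  | 0 => le_refl ε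
  | n + 1 => by
      have h1 := epsIt_le_self hP hε hε1 n
      have h0 := epsIt_pos (lt_of_lt_of_le one_pos hP) hε n
      have hle1 := epsIt_le_one hP hε hε1 n
      have hPinv : P⁻¹ ≤ 1 := inv_le_one_of_one_le₀ hP
      have hPinv0 : 0 < P⁻¹ := inv_pos.mpr (lt_of_lt_of_le one_pos hP)
      have h : (epsIt P ε n) ^ 2 * P⁻¹ ≤ epsIt P ε n := by nlinarith
      exact le_trans h h1

lemma epsIt_shift (P ε : ℝ) : ∀ n, epsIt P ε (n + 1) = epsIt P (ε ^ 2 * P⁻¹) n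
  | 0 => rfl
  | n + 1 => by
      show (epsIt P ε (n + 1)) ^ 2 * P⁻¹ = (epsIt P (ε ^ 2 * P⁻¹) n) ^ 2 * P⁻¹
      rw [epsIt_shift P ε n]

lemma one_le_exp2 (x : ℝ) : 1 ≤ exp2 x := by
  have h : (0:ℝ) ≤ Real.exp x := le_of_lt (Real.exp_pos x)
  calc (1:ℝ) = Real.exp 0 := (Real.exp_zero).symm
    _ ≤ Real.exp (Real.exp x) := Real.exp_le_exp.mpr h

lemma inv_step {P ε : ℝ} (hP : 0 < P) (hε : 0 < ε) :
    P * (ε⁻¹) ^ 2 = (ε ^ 2 * P⁻¹)⁻¹ := by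
  field_simp

lemma Fiter_pos {P Q : ℝ} (hP : 0 < P) (hQ : 0 < Q) :
    ∀ n, ∀ ε : ℝ, 0 < ε → 0 < Fiter P Q n ε
  | 0, ε, hε => mul_pos hQ (inv_pos.mpr hε)
  | n + 1, ε, hε => by
      have h1 : (0:ℝ) < exp2 (P * (ε⁻¹) ^ 2) :=
        lt_of_lt_of_le one_pos (one_le_exp2 _)
      have h2 : 0 < ε ^ 2 * P⁻¹ := by positivity
      exact mul_pos h1 (Fiter_pos hP hQ n (ε ^ 2 * P⁻¹) h2)

/-- Lower bound: `F_{n+1}(ε) ≥ exp2(1/ε_{n+1})`. -/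
lemma lower (P Q : ℝ) (hP : 3 ≤ P) (hQ : 1 ≤ Q) :
    ∀ n, ∀ ε : ℝ, 0 < ε → ε ≤ 1 →
      exp2 ((epsIt P ε (n + 1))⁻¹) ≤ Fiter P Q (n + 1) ε := by
  intro n
  induction n with
  | zero =>
      intro ε hε0 hε1
      have hP0 : (0:ℝ) < P := by linarith
      have he1 : epsIt P ε 1 = ε ^ 2 * P⁻¹ := rfl
      have hpos : 0 < ε ^ 2 * P⁻¹ := by positivity
      have hle1 : ε ^ 2 * P⁻¹ ≤ 1 := epsIt_le_one (by linarith) hε0 hε1 1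
      have h2 : 1 ≤ (ε ^ 2 * P⁻¹)⁻¹ := by
        simpa using inv_anti₀ hpos hle1
      have h3 : 1 ≤ Q * (ε ^ 2 * P⁻¹)⁻¹ := by nlinarith
      show exp2 ((epsIt P ε 1)⁻¹) ≤ exp2 (P * (ε⁻¹) ^ 2) * (Q * (ε ^ 2 * P⁻¹)⁻¹)
      rw [he1, inv_step hP0 hε0]
      nlinarith [one_le_exp2 ((ε ^ 2 * P⁻¹)⁻¹)]
  | succ n ih =>
      intro ε hε0 hε1
      have hP0 : (0:ℝ) < P := by linarith
      have hε₁0 : 0 < ε ^ 2 * P⁻¹ := by positivity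
      have hε₁1 : ε ^ 2 * P⁻¹ ≤ 1 := epsIt_le_one (by linarith) hε0 hε1 1
      have ih' := ih (ε ^ 2 * P⁻¹) hε₁0 hε₁1
      have hsh : epsIt P ε (n + 2) = epsIt P (ε ^ 2 * P⁻¹) (n + 1) := epsIt_shift P ε (n + 1)
      show exp2 ((epsIt P ε (n + 2))⁻¹) ≤ exp2 (P * (ε⁻¹) ^ 2) * Fiter P Q (n + 1) (ε ^ 2 * P⁻¹)
      rw [hsh]
      have h1 : (1:ℝ) ≤ exp2 ((epsIt P (ε ^ 2 * P⁻¹) (n + 1))⁻¹) := one_le_exp2 _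
      nlinarith [one_le_exp2 (P * (ε⁻¹) ^ 2)]

/-- Upper bound: `F_n(ε) ≤ exp((n+Q)·exp(1/ε_n))`. -/
lemma upper (P Q : ℝ) (hP : 3 ≤ P) (hQ : 1 ≤ Q) :
    ∀ n, ∀ ε : ℝ, 0 < ε → ε ≤ 1 →
      Fiter P Q n ε ≤ Real.exp (((n : ℝ) + Q) * Real.exp ((epsIt P ε n)⁻¹)) := by
  intro n
  induction n with
  | zero =>
      intro ε hε0 hε1
      show Q * ε⁻¹ ≤ Real.exp ((((0:ℕ) : ℝ) + Q) * Real.exp ((epsIt P ε 0)⁻¹))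
      have h1 : ε⁻¹ + 1 ≤ Real.exp ε⁻¹ := Real.add_one_le_exp ε⁻¹
      have h2 : Q + 1 ≤ Real.exp Q := Real.add_one_le_exp Q
      have hinv0 : 0 < ε⁻¹ := inv_pos.mpr hε0
      have key : Q * ε⁻¹ ≤ Real.exp (Q + ε⁻¹) := by
        rw [Real.exp_add]
        nlinarith [Real.exp_pos Q, Real.exp_pos ε⁻¹]
      have key2 : Q + ε⁻¹ ≤ (((0:ℕ) : ℝ) + Q) * Real.exp ((epsIt P ε 0)⁻¹) := by
        show Q + ε⁻¹ ≤ (((0:ℕ) : ℝ) + Q) * Real.exp ε⁻¹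
        push_cast
        nlinarith
      exact le_trans key (Real.exp_le_exp.mpr key2)
  | succ n ih =>
      intro ε hε0 hε1
      have hP0 : (0:ℝ) < P := by linarith
      have hε₁0 : 0 < ε ^ 2 * P⁻¹ := by positivity
      have hε₁1 : ε ^ 2 * P⁻¹ ≤ 1 := epsIt_le_one (by linarith) hε0 hε1 1
      have ih' := ih (ε ^ 2 * P⁻¹) hε₁0 hε₁1
      have hsh : epsIt P ε (n + 1) = epsIt P (ε ^ 2 * P⁻¹) n := epsIt_shift P ε n
      have hηpos : 0 < epsIt P ε (n + 1) := epsIt_pos hP0 hε0 (n + 1)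
      have hηle : epsIt P ε (n + 1) ≤ ε ^ 2 * P⁻¹ := by
        rw [hsh]; exact epsIt_le_self (by linarith) hε₁0 hε₁1 n
      have hinv_le : (ε ^ 2 * P⁻¹)⁻¹ ≤ (epsIt P ε (n + 1))⁻¹ :=
        inv_anti₀ hηpos hηle
      have hfac : exp2 (P * (ε⁻¹) ^ 2) ≤ Real.exp (Real.exp ((epsIt P ε (n + 1))⁻¹)) := by
        unfold exp2
        rw [inv_step hP0 hε0]
        exact Real.exp_le_exp.mpr (Real.exp_le_exp.mpr hinv_le)
      have hFup : Fiter P Q n (ε ^ 2 * P⁻¹) ≤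
          Real.exp (((n : ℝ) + Q) * Real.exp ((epsIt P ε (n + 1))⁻¹)) := by
        refine le_trans ih' (Real.exp_le_exp.mpr ?_)
        have hc : (0:ℝ) ≤ (n : ℝ) + Q := by positivity
        have hmono : Real.exp ((epsIt P (ε ^ 2 * P⁻¹) n)⁻¹) ≤
            Real.exp ((epsIt P ε (n + 1))⁻¹) := by
          rw [hsh]
        exact mul_le_mul_of_nonneg_left hmono hc
      have hFpos : 0 ≤ Fiter P Q n (ε ^ 2 * P⁻¹) :=
        le_of_lt (Fiter_pos hP0 (by linarith) n _ hε₁0)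
      show exp2 (P * (ε⁻¹) ^ 2) * Fiter P Q n (ε ^ 2 * P⁻¹) ≤
        Real.exp ((((n + 1 : ℕ) : ℝ) + Q) * Real.exp ((epsIt P ε (n + 1))⁻¹))
      calc exp2 (P * (ε⁻¹) ^ 2) * Fiter P Q n (ε ^ 2 * P⁻¹)
          ≤ Real.exp (Real.exp ((epsIt P ε (n + 1))⁻¹)) *
            Real.exp (((n : ℝ) + Q) * Real.exp ((epsIt P ε (n + 1))⁻¹)) :=
            mul_le_mul hfac hFup hFpos (le_of_lt (Real.exp_pos _))
        _ = Real.exp (Real.exp ((epsIt P ε (n + 1))⁻¹) +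
              ((n : ℝ) + Q) * Real.exp ((epsIt P ε (n + 1))⁻¹)) := (Real.exp_add _ _).symm
        _ = Real.exp ((((n + 1 : ℕ) : ℝ) + Q) * Real.exp ((epsIt P ε (n + 1))⁻¹)) := by
            push_cast; ring_nf

lemma log_rec {P x : ℝ} (hP : 0 < P) (hx : 0 < x) :
    Real.log ((x ^ 2 * P⁻¹)⁻¹) = Real.log P + 2 * Real.log x⁻¹ := by
  rw [Real.log_inv, Real.log_mul (by positivity) (by positivity), Real.log_pow,
    Real.log_inv, Real.log_inv]
  push_cast
  ring

/-- `log(1/ε_{n+1}) ≥ 2^{n+1}` for `ε ≤ 1/2`, `P ≥ 3`. -/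
lemma log_lower {P ε : ℝ} (hP : 3 ≤ P) (hε0 : 0 < ε) (hε : ε ≤ 1 / 2) :
    ∀ n, (2:ℝ) ^ (n + 1) ≤ Real.log ((epsIt P ε (n + 1))⁻¹) := by
  have hP0 : (0:ℝ) < P := by linarith
  have hlogP1 : 1 ≤ Real.log P := by
    rw [Real.le_log_iff_exp_le hP0]
    have : Real.exp 1 < 2.7182818286 := Real.exp_one_lt_d9
    linarith
  have h2inv : (2:ℝ) ≤ ε⁻¹ := by
    rw [show (2:ℝ) = (1/2 : ℝ)⁻¹ by norm_num]
    exact inv_anti₀ hε0 hε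
  have hlogε : Real.log 2 ≤ Real.log ε⁻¹ := Real.log_le_log (by norm_num) h2inv
  have hlog2 : (0.6931471803 : ℝ) < Real.log 2 := Real.log_two_gt_d9
  intro n
  induction n with
  | zero =>
      have h : Real.log ((epsIt P ε 1)⁻¹) = Real.log P + 2 * Real.log ε⁻¹ :=
        log_rec hP0 hε0
      rw [h]
      have : (2:ℝ) ^ (0 + 1) = 2 := by norm_num
      rw [this]
      nlinarith
  | succ n ih =>
      have hpos : 0 < epsIt P ε (n + 1) := epsIt_pos hP0 hε0 (n + 1)
      have h : Real.log ((epsIt P ε (n + 2))⁻¹) =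
          Real.log P + 2 * Real.log ((epsIt P ε (n + 1))⁻¹) := log_rec hP0 hpos
      rw [h]
      have hp : (2:ℝ) ^ (n + 2) = 2 * 2 ^ (n + 1) := by ring
      rw [hp]
      nlinarith

/-- `log(1/ε_n) + log P ≤ 2^n (log(1/ε) + log P)`. -/
lemma log_upper {P ε : ℝ} (hP : 3 ≤ P) (hε0 : 0 < ε) :
    ∀ n, Real.log ((epsIt P ε n)⁻¹) + Real.log P ≤
      (2:ℝ) ^ n * (Real.log ε⁻¹ + Real.log P) := by
  have hP0 : (0:ℝ) < P := by linarith
  intro n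
  induction n with
  | zero => simp [epsIt]
  | succ n ih =>
      have hpos : 0 < epsIt P ε n := epsIt_pos hP0 hε0 n
      have h : Real.log ((epsIt P ε (n + 1))⁻¹) =
          Real.log P + 2 * Real.log ((epsIt P ε n)⁻¹) := log_rec hP0 hpos
      rw [h]
      have hp : (2:ℝ) ^ (n + 1) = 2 * 2 ^ n := by ring
      rw [hp]
      nlinarith

/-- Key inequality: `e^α · e^t ≤ e^{α e^t}` for `α ≥ 1`, `t ≥ 0`. -/
lemma key_ineq {α t : ℝ} (hα : 1 ≤ α) (ht : 0 ≤ t) :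
    Real.exp α * Real.exp t ≤ Real.exp (α * Real.exp t) := by
  rw [← Real.exp_add]
  apply Real.exp_le_exp.mpr
  have h1 : t + 1 ≤ Real.exp t := Real.add_one_le_exp t
  nlinarith

end FiterAux

set_option maxHeartbeats 1000000 in
theorem Fiter_growth (P Q : ℝ) (hP : 3 ≤ P) (hQ : 1 ≤ Q) :
    ∃ C₁ C₂ : ℝ, 0 < C₁ ∧ C₁ < C₂ ∧
      ∀ ε : ℝ, 0 < ε → ε ≤ 1 / 2 →
        exp4 (C₁ * ε⁻¹) ≤ Fiter P Q ⌊ε⁻¹⌋₊ ε ∧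
        Fiter P Q ⌊ε⁻¹⌋₊ ε ≤ exp4 (C₂ * ε⁻¹) := by
  open FiterAux in
  refine ⟨1/4, Real.log 2 + 1 + P + Q + 2, by norm_num, by nlinarith [Real.log_two_gt_d9], ?_⟩
  intro ε hε0 hε2
  have hP0 : (0:ℝ) < P := by linarith
  have hε1 : ε ≤ 1 := by linarith
  have hinv0 : 0 < ε⁻¹ := inv_pos.mpr hε0
  have h2inv : (2:ℝ) ≤ ε⁻¹ := by
    rw [show (2:ℝ) = (1/2 : ℝ)⁻¹ by norm_num]
    exact inv_anti₀ hε0 hε2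
  have hlog2 : (0.6931471803 : ℝ) < Real.log 2 := Real.log_two_gt_d9
  have hlog2' : Real.log 2 < 1 := by
    have := Real.log_lt_sub_one_of_pos (x := 2) (by norm_num) (by norm_num)
    linarith
  -- the floor
  have hr2 : 2 ≤ ⌊ε⁻¹⌋₊ := Nat.le_floor (by exact_mod_cast h2inv)
  obtain ⟨s, hs⟩ : ∃ s, ⌊ε⁻¹⌋₊ = s + 1 := ⟨⌊ε⁻¹⌋₊ - 1, by omega⟩
  have hr_le : ((⌊ε⁻¹⌋₊ : ℕ) : ℝ) ≤ ε⁻¹ := Nat.floor_le (le_of_lt hinv0)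
  have hr_gt : ε⁻¹ < ((⌊ε⁻¹⌋₊ : ℕ) : ℝ) + 1 := Nat.lt_floor_add_one ε⁻¹
  rw [hs] at hr_le hr_gt ⊢
  push_cast at hr_le hr_gt
  -- positivity of ε_r
  have hηpos : 0 < epsIt P ε (s + 1) := epsIt_pos hP0 hε0 (s + 1)
  have hηinvpos : 0 < (epsIt P ε (s + 1))⁻¹ := inv_pos.mpr hηpos
  constructor
  · -- lower bound
    have hlow := FiterAux.lower P Q hP hQ s ε hε0 hε1
    refine le_trans ?_ hlow
    unfold exp4 exp2
    apply Real.exp_le_exp.mpr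
    apply Real.exp_le_exp.mpr
    rw [← Real.exp_log hηinvpos]
    apply Real.exp_le_exp.mpr
    have hL := FiterAux.log_lower hP hε0 hε2 s
    refine le_trans ?_ hL
    have h2pow : (2:ℝ) ^ (s + 1) = Real.exp (((s + 1 : ℕ) : ℝ) * Real.log 2) := by
      rw [Real.exp_nat_mul, Real.exp_log (by norm_num : (0:ℝ) < 2)]
    rw [h2pow]
    apply Real.exp_le_exp.mpr
    push_cast
    have hLpos : (0:ℝ) < Real.log 2 := by linarith
    have hs1 : ε⁻¹ - 1 ≤ (s:ℝ) + 1 := by linarith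
    nlinarith [mul_le_mul_of_nonneg_right hs1 hLpos.le,
      mul_nonneg (by linarith : (0:ℝ) ≤ Real.log 2 - 0.6931471803)
        (by linarith : (0:ℝ) ≤ ε⁻¹ - 1)]
  · -- upper bound
    have hup := FiterAux.upper P Q hP hQ (s + 1) ε hε0 hε1
    set a : ℝ := Real.log 2 + 1 + P with ha
    set α : ℝ := Real.exp (a * ε⁻¹) with hα
    set t : ℝ := (Q + 2) * ε⁻¹ with ht
    set β : ℝ := Real.exp t with hβ
    have ht0 : 0 ≤ t := by positivity
    have ha1 : 1 ≤ a * ε⁻¹ := by nlinarith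
    have hα1 : 1 ≤ α := by
      rw [hα]; calc (1:ℝ) = Real.exp 0 := Real.exp_zero.symm
        _ ≤ Real.exp (a * ε⁻¹) := Real.exp_le_exp.mpr (by linarith)
    -- log(1/ε_r) ≤ α
    have hLu := FiterAux.log_upper hP hε0 (s + 1)
    have hlogP0 : 0 ≤ Real.log P := Real.log_nonneg (by linarith)
    have hlogε_le : Real.log ε⁻¹ ≤ ε⁻¹ := by
      have := Real.log_le_sub_one_of_pos hinv0; linarith
    have hlogP_le : Real.log P ≤ P := by
      have := Real.log_le_sub_one_of_pos hP0; linarith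
    have h2pow_le : (2:ℝ) ^ (s + 1) ≤ Real.exp (ε⁻¹ * Real.log 2) := by
      have h2pow : (2:ℝ) ^ (s + 1) = Real.exp (((s + 1 : ℕ) : ℝ) * Real.log 2) := by
        rw [Real.exp_nat_mul, Real.exp_log (by norm_num : (0:ℝ) < 2)]
      rw [h2pow]
      apply Real.exp_le_exp.mpr
      push_cast
      have hLpos : (0:ℝ) < Real.log 2 := by linarith
      nlinarith
    have hLα : Real.log ((epsIt P ε (s + 1))⁻¹) ≤ α := by
      have h1 : Real.log ((epsIt P ε (s + 1))⁻¹) ≤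
          (2:ℝ) ^ (s + 1) * (Real.log ε⁻¹ + Real.log P) := by
        have hnn : 0 ≤ Real.log ε⁻¹ + Real.log P := by
          have : 0 ≤ Real.log ε⁻¹ := Real.log_nonneg (by linarith)
          linarith
        linarith [hLu, hlogP0]
      have h2 : (2:ℝ) ^ (s + 1) * (Real.log ε⁻¹ + Real.log P) ≤
          Real.exp (ε⁻¹ * Real.log 2) * Real.exp (ε⁻¹ + P) := by
        have hap : Real.log ε⁻¹ + Real.log P ≤ Real.exp (ε⁻¹ + P) := by
          have := Real.add_one_le_exp (ε⁻¹ + P)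
          linarith
        have hnn2 : (0:ℝ) ≤ Real.log ε⁻¹ + Real.log P := by
          have : 0 ≤ Real.log ε⁻¹ := Real.log_nonneg (by linarith)
          linarith
        have hpownn : (0:ℝ) ≤ (2:ℝ)^(s+1) := by positivity
        exact mul_le_mul h2pow_le hap hnn2 (le_of_lt (Real.exp_pos _))
      have h3 : Real.exp (ε⁻¹ * Real.log 2) * Real.exp (ε⁻¹ + P) ≤ α := by
        rw [← Real.exp_add, hα]
        apply Real.exp_le_exp.mpr
        rw [ha]
        linarith [mul_nonneg (show (0:ℝ) ≤ P by linarith) (show (0:ℝ) ≤ ε⁻¹ - 1 by linarith)]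
      linarith
    -- 1/ε_r ≤ exp α
    have hinvα : (epsIt P ε (s + 1))⁻¹ ≤ Real.exp α := by
      rw [← Real.exp_log hηinvpos]
      exact Real.exp_le_exp.mpr hLα
    -- coefficient bound: (s+1) + Q ≤ β
    have hcoef : ((s:ℝ) + 1) + Q ≤ β := by
      have h1 : t + 1 ≤ β := Real.add_one_le_exp t
      rw [ht] at h1
      nlinarith
    -- putting it together
    refine le_trans hup ?_
    unfold exp4
    apply Real.exp_le_exp.mpr
    have hX : (((s + 1 : ℕ) : ℝ) + Q) * Real.exp ((epsIt P ε (s + 1))⁻¹) ≤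
        β * Real.exp (Real.exp α) := by
      push_cast
      have h1 : Real.exp ((epsIt P ε (s + 1))⁻¹) ≤ Real.exp (Real.exp α) :=
        Real.exp_le_exp.mpr hinvα
      have h2 : (0:ℝ) ≤ (s:ℝ) + 1 + Q := by positivity
      have h3 : (0:ℝ) < Real.exp (Real.exp α) := Real.exp_pos _
      nlinarith [Real.exp_pos ((epsIt P ε (s + 1))⁻¹)]
    have hAB : β * Real.exp (Real.exp α) ≤ Real.exp (Real.exp α * β) := by
      rw [hβ, mul_comm β _]
      exact FiterAux.key_ineq (by
        calc (1:ℝ) ≤ α := hα1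
          _ ≤ Real.exp α := by have := Real.add_one_le_exp α; linarith) ht0
    have hfin : Real.exp α * β ≤ Real.exp (α * β) := by
      rw [hβ]
      exact FiterAux.key_ineq hα1 ht0
    have hexp_eq : Real.exp ((Real.log 2 + 1 + P + Q + 2) * ε⁻¹) = α * β := by
      rw [hα, hβ, ← Real.exp_add, ha, ht]
      ring_nf
    rw [hexp_eq]
    calc (((s + 1 : ℕ) : ℝ) + Q) * Real.exp ((epsIt P ε (s + 1))⁻¹)
        ≤ β * Real.exp (Real.exp α) := hX
      _ ≤ Real.exp (Real.exp α * β) := hAB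
      _ ≤ Real.exp (Real.exp (α * β)) := Real.exp_le_exp.mpr hfin

end
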